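/- Let A ∈ ℝ^{3×3} be symmetric positive definite with eigenvalues 0 < λ₁ ≤ λ₂ < λ₃ and corresponding orthonormal eigenvectors v₁, v₂, v₃. Suppose λ₁ < λ₁λ₃/(λ₃ − λ₁) ≤ λ₂, and define u := α₂ v₂ + α₃ v₃ with α₂² = λ₂/(λ₂+λ₃), α₃² = λ₃/(λ₂+λ₃). Then u is a unit vector and for every unit eigenvector v of A, Δ(u,v) := uᵀ(tr(A)I₃ − A − 2vᵀAv(I₃ − vvᵀ))u ≥ λ₁. -/

import Mathlib

open Matrix Real

noncomputable def skew (x : Fin 3 → ℝ) : Matrix (Fin 3) (Fin 3) ℝ :=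
  !![0, -x 2, x 1; x 2, 0, -x 0; -x 1, x 0, 0]

noncomputable def psi (A : Matrix (Fin 3) (Fin 3) ℝ) : Fin 3 → ℝ :=
  ![(A 2 1 - A 1 2)/2, (A 0 2 - A 2 0)/2, (A 1 0 - A 0 1)/2]

lemma aux_scalar (L0 L1 L2 μ a2 a3 c0 c1 c2 : ℝ)
    (h0 : 0 < L0) (h1 : 0 < L1) (h2 : 0 < L2)
    (h01 : L0 ≤ L1) (h12 : L1 < L2)
    (ha2 : a2 ^ 2 = L1 / (L1 + L2)) (ha3 : a3 ^ 2 = L2 / (L1 + L2))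
    (hc : c0 ^ 2 + c1 ^ 2 + c2 ^ 2 = 1)
    (hr0 : L0 * c0 = μ * c0) (hr1 : L1 * c1 = μ * c1) (hr2 : L2 * c2 = μ * c2)
    (hg : L0 * (L1 + L2) ≤ L1 * L2) :
    L0 ≤ (L0 + L1 + L2) - (a2 ^ 2 * L1 + a3 ^ 2 * L2)
      - 2 * μ * (1 - (a2 * c1 + a3 * c2) ^ 2) := by
  have hS : (0:ℝ) < L1 + L2 := by linarith
  by_cases hc2 : c2 = 0
  · subst hc2
    by_cases hc0 : c0 = 0
    · subst hc0
      have hc1sq : c1 ^ 2 = 1 := by linarith [hc]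
      have hc1 : c1 ≠ 0 := by
        intro h; rw [h] at hc1sq; norm_num at hc1sq
      have hμ : L1 = μ := mul_right_cancel₀ hc1 hr1
      subst hμ
      have e : (a2 * c1 + a3 * 0) ^ 2 = a2 ^ 2 * c1 ^ 2 := by ring
      rw [e, ha2, ha3, hc1sq]
      have hEq : L0 + L1 + L2 - (L1 / (L1 + L2) * L1 + L2 / (L1 + L2) * L2)
          - 2 * L1 * (1 - L1 / (L1 + L2) * 1) = L0 := by
        field_simp
        ring
      linarith [hEq]
    · have hμ : L0 = μ := mul_right_cancel₀ hc0 hr0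
      subst hμ
      have e : (a2 * c1 + a3 * 0) ^ 2 = a2 ^ 2 * c1 ^ 2 := by ring
      rw [e, ha2, ha3]
      have hkey : L0 + L1 + L2 - (L1 / (L1 + L2) * L1 + L2 / (L1 + L2) * L2)
          - 2 * L0 * (1 - L1 / (L1 + L2) * c1 ^ 2) - L0
          = (2 * (L1 * L2 - L0 * (L1 + L2)) + 2 * L0 * L1 * c1 ^ 2) / (L1 + L2) := by
        field_simp
        ring
      have hnum : 0 ≤ 2 * (L1 * L2 - L0 * (L1 + L2)) + 2 * L0 * L1 * c1 ^ 2 := by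
        nlinarith [mul_nonneg (mul_nonneg h0.le h1.le) (sq_nonneg c1)]
      linarith [hkey, div_nonneg hnum hS.le]
  · have hμ : L2 = μ := mul_right_cancel₀ hc2 hr2
    subst hμ
    have hc0 : c0 = 0 := by
      by_contra h
      have := mul_right_cancel₀ h hr0
      linarith
    have hc1 : c1 = 0 := by
      by_contra h
      have := mul_right_cancel₀ h hr1
      linarith
    subst hc0; subst hc1
    have hc2sq : c2 ^ 2 = 1 := by linarith [hc]
    have e : (a2 * 0 + a3 * c2) ^ 2 = a3 ^ 2 * c2 ^ 2 := by ring
    rw [e, ha2, ha3, hc2sq]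
    have hEq : L0 + L1 + L2 - (L1 / (L1 + L2) * L1 + L2 / (L1 + L2) * L2)
        - 2 * L2 * (1 - L2 / (L1 + L2) * 1) = L0 := by
      field_simp
      ring
    linarith [hEq]

theorem stmt18 (A : Matrix (Fin 3) (Fin 3) ℝ)
    (hsymm : A.IsSymm) (hpd : A.PosDef)
    (lam : Fin 3 → ℝ) (v : Fin 3 → Fin 3 → ℝ)
    (hord : lam 0 ≤ lam 1 ∧ lam 1 < lam 2)
    (horth : ∀ i j, v i ⬝ᵥ v j = if i = j then 1 else 0)
    (heig : ∀ i, A *ᵥ v i = lam i • v i)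
    (hgap : lam 0 < lam 0 * lam 2 / (lam 2 - lam 0) ∧
            lam 0 * lam 2 / (lam 2 - lam 0) ≤ lam 1)
    (α₂ α₃ : ℝ) (hα₂ : α₂ ^ 2 = lam 1 / (lam 1 + lam 2))
    (hα₃ : α₃ ^ 2 = lam 2 / (lam 1 + lam 2))
    (u : Fin 3 → ℝ) (hu : u = α₂ • v 1 + α₃ • v 2) :
    u ⬝ᵥ u = 1 ∧
    ∀ w : Fin 3 → ℝ, w ⬝ᵥ w = 1 → (∃ μ : ℝ, A *ᵥ w = μ • w) →
      lam 0 ≤ u ⬝ᵥ ((A.trace • (1 : Matrix (Fin 3) (Fin 3) ℝ) - A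
        - (2 * (w ⬝ᵥ (A *ᵥ w))) • (1 - vecMulVec w w)) *ᵥ u) := by
  obtain ⟨hord01, hord12⟩ := hord
  have hA : Aᵀ = A := hsymm
  have hvne : ∀ i, v i ≠ 0 := by
    intro i h
    have := horth i i
    simp [h] at this
  have hlam_pos : ∀ i, 0 < lam i := by
    intro i
    have h : 0 < v i ⬝ᵥ (A *ᵥ v i) := by simpa using hpd.dotProduct_mulVec_pos (hvne i)
    rw [heig i, dotProduct_smul, smul_eq_mul, horth] at h
    simpa using h
  have hS : (0:ℝ) < lam 1 + lam 2 := by linarith [hlam_pos 1, hlam_pos 2]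
  have hαsum : α₂ ^ 2 + α₃ ^ 2 = 1 := by
    rw [hα₂, hα₃]; field_simp
  -- orthogonal matrix
  set V : Matrix (Fin 3) (Fin 3) ℝ := Matrix.of v with hV
  have hVVt : V * Vᵀ = 1 := by
    ext i j
    have := horth i j
    simpa [Matrix.mul_apply, dotProduct, Matrix.one_apply, hV] using this
  have hVtV : Vᵀ * V = 1 := mul_eq_one_comm.mp hVVt
  have hiso : ∀ x : Fin 3 → ℝ, (V *ᵥ x) ⬝ᵥ (V *ᵥ x) = x ⬝ᵥ x := by
    intro x
    have h1 : V *ᵥ x = x ᵥ* Vᵀ := by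
      rw [← Matrix.mulVec_transpose, Matrix.transpose_transpose]
    rw [Matrix.dotProduct_mulVec, h1, Matrix.vecMul_vecMul, hVtV, Matrix.vecMul_one]
  -- trace
  have hD : A * Vᵀ = Vᵀ * Matrix.diagonal lam := by
    ext i j
    have e1 : (A * Vᵀ) i j = (A *ᵥ v j) i := by
      simp [Matrix.mul_apply, Matrix.mulVec, dotProduct, hV]
    rw [e1, heig j]
    simp [Matrix.mul_apply, Matrix.diagonal, hV, mul_comm]
  have htr : A.trace = lam 0 + lam 1 + lam 2 := by
    have hAe : A = Vᵀ * Matrix.diagonal lam * V := by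
      calc A = A * (Vᵀ * V) := by rw [hVtV, Matrix.mul_one]
        _ = (A * Vᵀ) * V := by rw [Matrix.mul_assoc]
        _ = _ := by rw [hD]
    rw [hAe, Matrix.trace_mul_cycle, hVVt, Matrix.one_mul]
    simp [Matrix.trace, Matrix.diag, Fin.sum_univ_three]
  -- u facts
  have h11 : v 1 ⬝ᵥ v 1 = 1 := by rw [horth]; rw [if_pos rfl]
  have h22 : v 2 ⬝ᵥ v 2 = 1 := by rw [horth]; rw [if_pos rfl]
  have h12 : v 1 ⬝ᵥ v 2 = 0 := by rw [horth]; rw [if_neg (by decide)]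
  have h21 : v 2 ⬝ᵥ v 1 = 0 := by rw [horth]; rw [if_neg (by decide)]
  have huu : u ⬝ᵥ u = 1 := by
    rw [hu]
    simp only [dotProduct_add, add_dotProduct, dotProduct_smul, smul_dotProduct,
      smul_eq_mul, h11, h22, h12, h21]
    linear_combination hαsum
  refine ⟨huu, ?_⟩
  intro w hw ⟨μ, hμ⟩
  have hAu : A *ᵥ u = (α₂ * lam 1) • v 1 + (α₃ * lam 2) • v 2 := by
    rw [hu, Matrix.mulVec_add, Matrix.mulVec_smul, Matrix.mulVec_smul, heig, heig,
      smul_smul, smul_smul]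
  have huAu : u ⬝ᵥ (A *ᵥ u) = α₂ ^ 2 * lam 1 + α₃ ^ 2 * lam 2 := by
    rw [hAu, hu]
    simp only [dotProduct_add, add_dotProduct, dotProduct_smul, smul_dotProduct,
      smul_eq_mul, h11, h22, h12, h21]
    ring
  have hwu : w ⬝ᵥ u = α₂ * (v 1 ⬝ᵥ w) + α₃ * (v 2 ⬝ᵥ w) := by
    rw [hu]
    simp only [dotProduct_add, dotProduct_smul, smul_eq_mul]
    rw [dotProduct_comm w (v 1), dotProduct_comm w (v 2)]
  have hwAw : w ⬝ᵥ (A *ᵥ w) = μ := by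
    rw [hμ, dotProduct_smul, smul_eq_mul, hw, mul_one]
  have hrel : ∀ i, lam i * (v i ⬝ᵥ w) = μ * (v i ⬝ᵥ w) := by
    intro i
    have h1 : v i ⬝ᵥ (A *ᵥ w) = μ * (v i ⬝ᵥ w) := by
      rw [hμ, dotProduct_smul, smul_eq_mul]
    have h2 : v i ⬝ᵥ (A *ᵥ w) = lam i * (v i ⬝ᵥ w) := by
      rw [Matrix.dotProduct_mulVec, ← Matrix.mulVec_transpose, hA, heig,
        smul_dotProduct, smul_eq_mul]
    rw [← h1, h2]
  have hcsum : (v 0 ⬝ᵥ w) ^ 2 + (v 1 ⬝ᵥ w) ^ 2 + (v 2 ⬝ᵥ w) ^ 2 = 1 := by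
    have h := hiso w
    rw [hw] at h
    rw [← h]
    simp [dotProduct, Fin.sum_univ_three, Matrix.mulVec, hV]
    ring
  have hvmv : vecMulVec w w *ᵥ u = (w ⬝ᵥ u) • w := by
    funext j
    simp [vecMulVec, Matrix.mulVec, dotProduct, Finset.mul_sum, mul_comm, mul_assoc,
      mul_left_comm]
  have key : u ⬝ᵥ ((A.trace • (1 : Matrix (Fin 3) (Fin 3) ℝ) - A
      - (2 * (w ⬝ᵥ (A *ᵥ w))) • (1 - vecMulVec w w)) *ᵥ u)
      = (lam 0 + lam 1 + lam 2) - (α₂ ^ 2 * lam 1 + α₃ ^ 2 * lam 2)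
        - 2 * μ * (1 - (α₂ * (v 1 ⬝ᵥ w) + α₃ * (v 2 ⬝ᵥ w)) ^ 2) := by
    rw [hwAw, Matrix.sub_mulVec, Matrix.sub_mulVec, Matrix.smul_mulVec,
      Matrix.one_mulVec, Matrix.smul_mulVec, Matrix.sub_mulVec,
      Matrix.one_mulVec, hvmv]
    rw [dotProduct_sub, dotProduct_sub, dotProduct_smul, dotProduct_smul,
      dotProduct_sub, dotProduct_smul]
    rw [htr, huu, huAu, dotProduct_comm u w, hwu]
    simp only [smul_eq_mul]
    ring
  rw [key]
  have hg : lam 0 * (lam 1 + lam 2) ≤ lam 1 * lam 2 := by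
    have h20 : 0 < lam 2 - lam 0 := by linarith
    have := (div_le_iff₀ h20).mp hgap.2
    nlinarith
  exact aux_scalar (lam 0) (lam 1) (lam 2) μ α₂ α₃ (v 0 ⬝ᵥ w) (v 1 ⬝ᵥ w) (v 2 ⬝ᵥ w)
    (hlam_pos 0) (hlam_pos 1) (hlam_pos 2) hord01 hord12 hα₂ hα₃ hcsum
    (hrel 0) (hrel 1) (hrel 2) hg
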